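/- Let S be a standard graded polynomial ring over a field and g_1,...,g_t a homogeneous regular sequence of elements of positive degree such that the ideal (g_1,...,g_t) is prime. Then S/(g_1,...,g_i) is an integral domain for all 1 ≤ i ≤ t; i.e., g_1,...,g_t is a prime sequence. -/

import Mathlib

open MvPolynomial

attribute [local instance] MvPolynomial.gradedAlgebra

private theorem pss_aux {k : Type*} [Field k] {n t : ℕ}
    (g : Fin t → MvPolynomial (Fin n) k)
    (hhom : ∀ i, ∃ d : ℕ, 0 < d ∧ (g i).IsHomogeneous d)
    (hreg : RingTheory.Sequence.IsRegular (MvPolynomial (Fin n) k) (List.ofFn g))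
    (hprime : (Ideal.span (Set.range g)).IsPrime) :
    ∀ i : ℕ, i ≤ t →
      (Ideal.span {p : MvPolynomial (Fin n) k | ∃ j : Fin t, (j : ℕ) < i ∧ p = g j}).IsPrime := by
  classical
  set 𝒜 := homogeneousSubmodule (Fin n) k with h𝒜
  set I : ℕ → Ideal (MvPolynomial (Fin n) k) :=
    fun i => Ideal.span {p : MvPolynomial (Fin n) k | ∃ j : Fin t, (j : ℕ) < i ∧ p = g j}
    with hIdef
  show ∀ i : ℕ, i ≤ t → (I i).IsPrime
  have hmono : ∀ {a b : ℕ}, a ≤ b → I a ≤ I b := by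
    intro a b hab
    apply Ideal.span_mono
    rintro p ⟨j, hj, rfl⟩
    exact ⟨j, lt_of_lt_of_le hj hab, rfl⟩
  have hIhom : ∀ i, (I i).IsHomogeneous 𝒜 := by
    intro i
    apply Ideal.homogeneous_span
    rintro x ⟨j, -, rfl⟩
    obtain ⟨d, -, hd⟩ := hhom j
    exact ⟨d, (mem_homogeneousSubmodule _ _).mpr hd⟩
  have hIt : I t = Ideal.span (Set.range g) := by
    apply congrArg Ideal.span
    ext p
    constructor
    · rintro ⟨j, -, rfl⟩; exact ⟨j, rfl⟩
    · rintro ⟨j, rfl⟩; exact ⟨j, j.isLt, rfl⟩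
  have hregmod : ∀ (i : ℕ) (hi : i < t) (z : MvPolynomial (Fin n) k),
      g ⟨i, hi⟩ * z ∈ I i → z ∈ I i := by
    intro i hi z hz
    have hlen : (List.ofFn g).length = t := List.length_ofFn (f := g)
    have hi' : i < (List.ofFn g).length := by rw [hlen]; exact hi
    have hreg' := hreg.toIsWeaklyRegular.regular_mod_prev i hi'
    have hid : Ideal.ofList ((List.ofFn g).take i) = I i := by
      apply congrArg Ideal.span
      ext p
      simp only [Set.mem_setOf_eq]
      constructor
      · intro hp
        obtain ⟨m, hm, hpm⟩ := List.mem_iff_getElem.mp hp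
        have hm' : m < i ∧ m < t := by
          simp only [List.length_take, hlen, lt_min_iff] at hm
          exact hm
        refine ⟨⟨m, hm'.2⟩, hm'.1, ?_⟩
        rw [← hpm]
        simp
      · rintro ⟨j, hj, rfl⟩
        apply List.mem_iff_getElem.mpr
        refine ⟨(j : ℕ), ?_, ?_⟩
        · simp only [List.length_take, hlen, lt_min_iff]
          exact ⟨hj, j.isLt⟩
        · simp
    rw [hid] at hreg'
    have helem : (List.ofFn g)[i]'hi' = g ⟨i, hi⟩ := by simp
    rw [helem] at hreg'
    have hst : (I i • ⊤ : Submodule (MvPolynomial (Fin n) k) (MvPolynomial (Fin n) k)) = I i := by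
      rw [smul_eq_mul, Ideal.mul_top]
    have h0 : g ⟨i, hi⟩ • (Submodule.Quotient.mk z :
        MvPolynomial (Fin n) k ⧸
          (I i • ⊤ : Submodule (MvPolynomial (Fin n) k) (MvPolynomial (Fin n) k)))
        = g ⟨i, hi⟩ • (0 : MvPolynomial (Fin n) k ⧸
          (I i • ⊤ : Submodule (MvPolynomial (Fin n) k) (MvPolynomial (Fin n) k))) := by
      rw [smul_zero, ← Submodule.Quotient.mk_smul, smul_eq_mul]
      exact (Submodule.Quotient.mk_eq_zero _).mpr (by rw [smul_eq_mul, Ideal.mul_top]; exact hz)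
    have hz0 := hreg' h0
    rw [Submodule.Quotient.mk_eq_zero, hst] at hz0
    exact hz0
  have descent : ∀ (i : ℕ) (hi : i < t), (I (i + 1)).IsPrime → (I i).IsPrime := by
    intro i hi hP
    obtain ⟨dg, hdg, hgihom⟩ := hhom ⟨i, hi⟩
    have hgi𝒜 : g ⟨i, hi⟩ ∈ 𝒜 dg := (mem_homogeneousSubmodule _ _).mpr hgihom
    have hsup : I (i + 1) = I i ⊔ Ideal.span {g ⟨i, hi⟩} := by
      rw [← Ideal.span_union]
      apply congrArg Ideal.span
      ext p
      constructor
      · rintro ⟨j, hj, rfl⟩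
        rcases Nat.lt_succ_iff_lt_or_eq.mp hj with h | h
        · exact Or.inl ⟨j, h, rfl⟩
        · refine Or.inr ?_
          have : j = ⟨i, hi⟩ := Fin.ext h
          rw [this]
          rfl
      · rintro (⟨j, hj, rfl⟩ | h)
        · exact ⟨j, Nat.lt_succ_of_lt hj, rfl⟩
        · rw [Set.mem_singleton_iff] at h
          exact ⟨⟨i, hi⟩, Nat.lt_succ_self i, h⟩
    have extract : ∀ (d : ℕ) (x : MvPolynomial (Fin n) k), x.IsHomogeneous d →
        x ∈ I (i + 1) →
        x ∈ I i ∨ ∃ e, e.IsHomogeneous (d - dg) ∧ x - g ⟨i, hi⟩ * e ∈ I i := by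
      intro d x hx hxI
      rw [hsup] at hxI
      obtain ⟨c, hc, w, hw, hcw⟩ := Submodule.mem_sup.mp hxI
      obtain ⟨e₀, he₀⟩ := Ideal.mem_span_singleton'.mp hw
      have hxd : (DirectSum.decompose 𝒜 x d : MvPolynomial (Fin n) k) = x :=
        DirectSum.decompose_of_mem_same _ ((mem_homogeneousSubmodule _ _).mpr hx)
      have hxd' : x = (DirectSum.decompose 𝒜 c d : MvPolynomial (Fin n) k) +
          (DirectSum.decompose 𝒜 (e₀ * g ⟨i, hi⟩) d : MvPolynomial (Fin n) k) := by
        rw [← hxd]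
        conv_lhs => rw [← hcw, ← he₀]
        rw [DirectSum.decompose_add, DirectSum.add_apply, Submodule.coe_add]
      by_cases hle : dg ≤ d
      · right
        refine ⟨(DirectSum.decompose 𝒜 e₀ (d - dg) : MvPolynomial (Fin n) k), ?_, ?_⟩
        · exact (mem_homogeneousSubmodule _ _).mp (SetLike.coe_mem _)
        · have hdec : (DirectSum.decompose 𝒜 (e₀ * g ⟨i, hi⟩) d : MvPolynomial (Fin n) k) =
              (DirectSum.decompose 𝒜 e₀ (d - dg) : MvPolynomial (Fin n) k) * g ⟨i, hi⟩ :=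
            DirectSum.coe_decompose_mul_of_right_mem_of_le 𝒜 hgi𝒜 hle
          rw [hdec] at hxd'
          have : x - g ⟨i, hi⟩ * (DirectSum.decompose 𝒜 e₀ (d - dg) : MvPolynomial (Fin n) k) =
              (DirectSum.decompose 𝒜 c d : MvPolynomial (Fin n) k) := by
            rw [hxd']; ring
          rw [this]
          exact hIhom i d hc
      · left
        have hdec0 : (DirectSum.decompose 𝒜 (e₀ * g ⟨i, hi⟩) d : MvPolynomial (Fin n) k) = 0 :=
          DirectSum.coe_decompose_mul_of_right_mem_of_not_le 𝒜 hgi𝒜 hle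
        rw [hdec0, add_zero] at hxd'
        rw [hxd']
        exact hIhom i d hc
    have key : ∀ (N dx dy : ℕ) (x y : MvPolynomial (Fin n) k), dx + dy = N →
        x.IsHomogeneous dx → y.IsHomogeneous dy → x * y ∈ I i →
        x ∈ I i ∨ y ∈ I i := by
      intro N
      induction N using Nat.strong_induction_on with
      | _ N ih =>
        intro dx dy x y hN hxh hyh hxy
        have hxyI1 : x * y ∈ I (i + 1) := hmono (Nat.le_succ i) hxy
        rcases hP.mem_or_mem hxyI1 with hx1 | hy1
        · rcases extract dx x hxh hx1 with hx0 | ⟨e, heh, hsub⟩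
          · exact Or.inl hx0
          · by_cases hle : dg ≤ dx
            · have h1 : g ⟨i, hi⟩ * (e * y) ∈ I i := by
                have h2 : (x - g ⟨i, hi⟩ * e) * y ∈ I i := Ideal.mul_mem_right _ _ hsub
                have h3 : g ⟨i, hi⟩ * (e * y) = x * y - (x - g ⟨i, hi⟩ * e) * y := by ring
                rw [h3]; exact Ideal.sub_mem _ hxy h2
              have hey : e * y ∈ I i := hregmod i hi _ h1
              rcases ih ((dx - dg) + dy) (by omega) (dx - dg) dy e y rfl heh hyh hey with h | h
              · left
                have hx' : x = (x - g ⟨i, hi⟩ * e) + g ⟨i, hi⟩ * e := by ring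
                rw [hx']
                exact Ideal.add_mem _ hsub (Ideal.mul_mem_left _ _ h)
              · exact Or.inr h
            · left
              -- dg > dx : e is homogeneous of degree 0 = dx - dg, but in fact we can argue
              -- via the extract in the not-le case; redo extract distinguishing is cleaner:
              -- here e ∈ 𝒜 (dx - dg) with dx - dg = 0; we cannot conclude directly, so
              -- we instead re-derive x ∈ I i from homogeneity.
              -- Use: x = (x - g*e) + g*e, and decompose x at dx kills g*e part.
              have hxmem : x ∈ I i := by
                have hsubh : (x - g ⟨i, hi⟩ * e) ∈ I i := hsub
                have hxdec : (DirectSum.decompose 𝒜 x dx : MvPolynomial (Fin n) k) = x :=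
                  DirectSum.decompose_of_mem_same _
                    ((mem_homogeneousSubmodule _ _).mpr hxh)
                have h4 : (DirectSum.decompose 𝒜 (x - g ⟨i, hi⟩ * e) dx :
                    MvPolynomial (Fin n) k) ∈ I i := hIhom i dx hsubh
                have h5 : (DirectSum.decompose 𝒜 (g ⟨i, hi⟩ * e) dx :
                    MvPolynomial (Fin n) k) = 0 :=
                  DirectSum.coe_decompose_mul_of_left_mem_of_not_le 𝒜 hgi𝒜 hle
                have h6 : (DirectSum.decompose 𝒜 (x - g ⟨i, hi⟩ * e) dx :
                    MvPolynomial (Fin n) k) = x := by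
                  rw [DirectSum.decompose_sub, DirectSum.sub_apply, AddSubgroupClass.coe_sub, hxdec, h5,
                    sub_zero]
                rw [← h6]; exact h4
              exact hxmem
        · rcases extract dy y hyh hy1 with hy0 | ⟨e, heh, hsub⟩
          · exact Or.inr hy0
          · by_cases hle : dg ≤ dy
            · have h1 : g ⟨i, hi⟩ * (x * e) ∈ I i := by
                have h2 : x * (y - g ⟨i, hi⟩ * e) ∈ I i := Ideal.mul_mem_left _ _ hsub
                have h3 : g ⟨i, hi⟩ * (x * e) = x * y - x * (y - g ⟨i, hi⟩ * e) := by ring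
                rw [h3]; exact Ideal.sub_mem _ hxy h2
              have hxe : x * e ∈ I i := hregmod i hi _ h1
              rcases ih (dx + (dy - dg)) (by omega) dx (dy - dg) x e rfl hxh heh hxe with h | h
              · exact Or.inl h
              · right
                have hy' : y = (y - g ⟨i, hi⟩ * e) + g ⟨i, hi⟩ * e := by ring
                rw [hy']
                exact Ideal.add_mem _ hsub (Ideal.mul_mem_left _ _ h)
            · right
              have hymem : y ∈ I i := by
                have hydec : (DirectSum.decompose 𝒜 y dy : MvPolynomial (Fin n) k) = y :=
                  DirectSum.decompose_of_mem_same _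
                    ((mem_homogeneousSubmodule _ _).mpr hyh)
                have h4 : (DirectSum.decompose 𝒜 (y - g ⟨i, hi⟩ * e) dy :
                    MvPolynomial (Fin n) k) ∈ I i := hIhom i dy hsub
                have h5 : (DirectSum.decompose 𝒜 (g ⟨i, hi⟩ * e) dy :
                    MvPolynomial (Fin n) k) = 0 :=
                  DirectSum.coe_decompose_mul_of_left_mem_of_not_le 𝒜 hgi𝒜 hle
                have h6 : (DirectSum.decompose 𝒜 (y - g ⟨i, hi⟩ * e) dy :
                    MvPolynomial (Fin n) k) = y := by
                  rw [DirectSum.decompose_sub, DirectSum.sub_apply, AddSubgroupClass.coe_sub, hydec, h5,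
                    sub_zero]
                rw [← h6]; exact h4
              exact hymem
    have hne : I i ≠ ⊤ := by
      intro h
      exact hP.ne_top (top_le_iff.mp (h ▸ hmono (Nat.le_succ i)))
    refine (hIhom i).isPrime_of_homogeneous_mem_or_mem hne ?_
    intro x y hx hy hxy
    obtain ⟨dx, hdx⟩ := hx
    obtain ⟨dy, hdy⟩ := hy
    exact key (dx + dy) dx dy x y rfl ((mem_homogeneousSubmodule _ _).mp hdx)
      ((mem_homogeneousSubmodule _ _).mp hdy) hxy
  have hdown : ∀ m : ℕ, (I (t - m)).IsPrime := by
    intro m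
    induction m with
    | zero => rw [Nat.sub_zero, hIt]; exact hprime
    | succ m ihm =>
      by_cases h : t ≤ m
      · have heq : t - (m + 1) = t - m := by omega
        rw [heq]; exact ihm
      · push_neg at h
        have h2 : t - (m + 1) < t := by omega
        have h3 : (t - (m + 1)) + 1 = t - m := by omega
        exact descent _ h2 (h3 ▸ ihm)
  intro i hi
  have heq : I i = I (t - (t - i)) := by rw [Nat.sub_sub_self hi]
  rw [heq]
  exact hdown (t - i)

/-- **Lemma (primeseq., first part).** If `g 1, …, g t` is a homogeneous regular sequence of
elements of positive degree in a standard graded polynomial ring `S` over a field, and the ideal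
`(g 1, …, g t)` is prime, then `S/(g 1, …, g i)` is a domain for all `1 ≤ i ≤ t`; that is,
each ideal `(g 1, …, g i)` is prime, i.e. `g` is a prime sequence. -/
theorem prime_sequence_of_regular_sequence_span_prime
    (k : Type*) [Field k] (n t : ℕ) (g : Fin t → MvPolynomial (Fin n) k)
    (hhom : ∀ i, ∃ d : ℕ, 0 < d ∧ (g i).IsHomogeneous d)
    (hreg : RingTheory.Sequence.IsRegular (MvPolynomial (Fin n) k) (List.ofFn g))
    (hprime : (Ideal.span (Set.range g)).IsPrime) :
    ∀ i : ℕ, 1 ≤ i → i ≤ t →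
      (Ideal.span {p : MvPolynomial (Fin n) k | ∃ j : Fin t, (j : ℕ) < i ∧ p = g j}).IsPrime ∧
      IsDomain (MvPolynomial (Fin n) k ⧸
        Ideal.span {p : MvPolynomial (Fin n) k | ∃ j : Fin t, (j : ℕ) < i ∧ p = g j}) := by
  intro i _ hit
  have hP := pss_aux g hhom hreg hprime i hit
  exact ⟨hP, (Ideal.Quotient.isDomain_iff_prime _).mpr hP⟩
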